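/- arXiv:2307.08320 — 3 statements merged into one kernel-verified Lean document; each statement's English description precedes it below -/
import Mathlib

section
/- Gödel's spacetime (ℝ⁴ with the Gödel metric) is homogeneous: for any two points m₁, m₂ ∈ ℝ⁴ there is a composition of the four basic isometries Θ₀^α, Θ₁^β, Θ₂^γ, Θ₃^δ mapping m₁ to m₂; specifically Θ₃^{δ} ∘ Θ₂^{γ} ∘ Θ₁^{β} ∘ Θ₀^{α} with α = x₀² - x₀¹, β = x₁² - x₁¹, γ = x₂² - x₂¹e^{-(x₁²-x₁¹)}, δ = x₃² - x₃¹ sends m₁ = (x₀¹,x₁¹,x₂¹,x₃¹) to m₂ = (x₀²,x₁²,x₂²,x₃²), and each factor is an isometry of the Gödel metric. -/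
open Real Matrix

/-- Gödel's metric on ℝ⁴, depending only on the coordinate `x 1`. -/
noncomputable def godelMetric (a : ℝ) (x : Fin 4 → ℝ) : Matrix (Fin 4) (Fin 4) ℝ :=
  a ^ 2 • !![1, 0, exp (x 1), 0;
             0, -1, 0, 0;
             exp (x 1), 0, exp (2 * x 1) / 2, 0;
             0, 0, 0, -1]

/-- Jacobian matrix of a map `ℝ⁴ → ℝ⁴`. -/
noncomputable def jacobian (Θ : (Fin 4 → ℝ) → (Fin 4 → ℝ)) (x : Fin 4 → ℝ) :
    Matrix (Fin 4) (Fin 4) ℝ :=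
  fun μ σ => fderiv ℝ Θ x (Pi.single σ 1) μ

/-- `Θ` is an isometry of the Gödel metric. -/
def IsGodelIsometry (a : ℝ) (Θ : (Fin 4 → ℝ) → (Fin 4 → ℝ)) : Prop :=
  ∀ x : Fin 4 → ℝ,
    (jacobian Θ x)ᵀ * godelMetric a (Θ x) * jacobian Θ x = godelMetric a x

noncomputable def Θ₀ (α : ℝ) (x : Fin 4 → ℝ) : Fin 4 → ℝ :=
  ![x 0 + α, x 1, x 2, x 3]

noncomputable def Θ₁ (β : ℝ) (x : Fin 4 → ℝ) : Fin 4 → ℝ :=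
  ![x 0, x 1 + β, x 2 * exp (-β), x 3]

noncomputable def Θ₂ (γ : ℝ) (x : Fin 4 → ℝ) : Fin 4 → ℝ :=
  ![x 0, x 1, x 2 + γ, x 3]

noncomputable def Θ₃ (δ : ℝ) (x : Fin 4 → ℝ) : Fin 4 → ℝ :=
  ![x 0, x 1, x 2, x 3 + δ]

lemma jacobian_affine (c v x : Fin 4 → ℝ) :
    jacobian (fun y i => c i * y i + v i) x = Matrix.diagonal c := by
  set L : (Fin 4 → ℝ) →L[ℝ] (Fin 4 → ℝ) :=
    ContinuousLinearMap.pi (fun i => c i • ContinuousLinearMap.proj i) with hLdef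
  have hfun : (fun y i => c i * y i + v i) = fun y => L y + v := by
    funext y i
    simp [hLdef, ContinuousLinearMap.pi_apply, smul_eq_mul]
  have hfd : fderiv ℝ (fun y => L y + v) x = L :=
    (L.hasFDerivAt.add_const v).fderiv
  rw [hfun]; unfold jacobian; rw [hfd]
  funext μ σ
  simp only [jacobian, hfun, hfd, hLdef, ContinuousLinearMap.pi_apply,
    ContinuousLinearMap.smul_apply, ContinuousLinearMap.proj_apply,
    smul_eq_mul, Matrix.diagonal, Pi.single_apply, Matrix.of_apply]
  by_cases h : μ = σ <;> simp [h, eq_comm]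

lemma Θ₀_eq (α : ℝ) : Θ₀ α = fun y i => (1 : Fin 4 → ℝ) i * y i + ![α,0,0,0] i := by
  funext y i; fin_cases i <;> simp [Θ₀] <;> ring

lemma Θ₁_eq (β : ℝ) :
    Θ₁ β = fun y i => (![1,1,Real.exp (-β),1] : Fin 4 → ℝ) i * y i + ![0,β,0,0] i := by
  funext y i; fin_cases i <;> simp [Θ₁] <;> ring

lemma Θ₂_eq (γ : ℝ) : Θ₂ γ = fun y i => (1 : Fin 4 → ℝ) i * y i + ![0,0,γ,0] i := by
  funext y i; fin_cases i <;> simp [Θ₂] <;> ring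

lemma Θ₃_eq (δ : ℝ) : Θ₃ δ = fun y i => (1 : Fin 4 → ℝ) i * y i + ![0,0,0,δ] i := by
  funext y i; fin_cases i <;> simp [Θ₃] <;> ring

lemma translation_isometry (a : ℝ) (Θ : (Fin 4 → ℝ) → (Fin 4 → ℝ)) (c v : Fin 4 → ℝ)
    (hΘ : Θ = fun y i => c i * y i + v i)
    (hiso : ∀ x : Fin 4 → ℝ,
      (Matrix.diagonal c)ᵀ * godelMetric a (Θ x) * Matrix.diagonal c = godelMetric a x) :
    IsGodelIsometry a Θ := by
  intro x
  have : jacobian Θ x = Matrix.diagonal c := by rw [hΘ]; exact jacobian_affine c v x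
  rw [this]; exact hiso x

/-- Gödel's spacetime is homogeneous: an explicit composition of the four
basic isometries maps any point `m₁` to any point `m₂`. -/
theorem godel_homogeneous (a : ℝ) (ha : 0 < a) (m₁ m₂ : Fin 4 → ℝ) :
    let α := m₂ 0 - m₁ 0
    let β := m₂ 1 - m₁ 1
    let γ := m₂ 2 - m₁ 2 * exp (-(m₂ 1 - m₁ 1))
    let δ := m₂ 3 - m₁ 3
    (Θ₃ δ ∘ Θ₂ γ ∘ Θ₁ β ∘ Θ₀ α) m₁ = m₂ ∧
    IsGodelIsometry a (Θ₀ α) ∧ IsGodelIsometry a (Θ₁ β) ∧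
    IsGodelIsometry a (Θ₂ γ) ∧ IsGodelIsometry a (Θ₃ δ) := by
  intro α β γ δ
  refine ⟨?_, ?_, ?_, ?_, ?_⟩
  · funext i
    fin_cases i <;>
      simp [Θ₀, Θ₁, Θ₂, Θ₃, α, β, γ, δ] <;> ring
  · refine translation_isometry a _ _ _ (Θ₀_eq α) (fun x => ?_)
    have h1 : Θ₀ α x 1 = x 1 := by simp [Θ₀]
    have hd : Matrix.diagonal (1 : Fin 4 → ℝ) = 1 := by
      ext i j; simp [Matrix.diagonal_apply, Matrix.one_apply]
    rw [hd, Matrix.transpose_one, Matrix.one_mul, Matrix.mul_one,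
      godelMetric, godelMetric, h1]
  · refine translation_isometry a _ _ _ (Θ₁_eq β) (fun x => ?_)
    have h1 : Θ₁ β x 1 = x 1 + β := by simp [Θ₁]
    rw [Matrix.diagonal_transpose]
    ext i j
    rw [Matrix.mul_diagonal, Matrix.diagonal_mul]
    fin_cases i <;> fin_cases j <;>
      · simp [godelMetric, h1, mul_add, two_mul, Real.exp_add, Real.exp_neg]
        try field_simp
        try ring
  · refine translation_isometry a _ _ _ (Θ₂_eq γ) (fun x => ?_)
    have h1 : Θ₂ γ x 1 = x 1 := by simp [Θ₂]
    have hd : Matrix.diagonal (1 : Fin 4 → ℝ) = 1 := by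
      ext i j; simp [Matrix.diagonal_apply, Matrix.one_apply]
    rw [hd, Matrix.transpose_one, Matrix.one_mul, Matrix.mul_one,
      godelMetric, godelMetric, h1]
  · refine translation_isometry a _ _ _ (Θ₃_eq δ) (fun x => ?_)
    have h1 : Θ₃ δ x 1 = x 1 := by simp [Θ₃]
    have hd : Matrix.diagonal (1 : Fin 4 → ℝ) = 1 := by
      ext i j; simp [Matrix.diagonal_apply, Matrix.one_apply]
    rw [hd, Matrix.transpose_one, Matrix.one_mul, Matrix.mul_one,
      godelMetric, godelMetric, h1]
end

section
/- If u⁰, u¹, u², u³ are differentiable functions of s solving the Gödel geodesic system du⁰/ds + 2u⁰u¹ + e^{x₁}u¹u² = 0, du¹/ds + e^{x₁}u⁰u² + (e^{2x₁}/2)(u²)² = 0, du²/ds - 2e^{-x₁}u¹u⁰ = 0, du³/ds = 0 (where dx₁/ds = u¹), then the quantity (u¹)² + (e^{2x₁}/2)(u²)² is constant along the solution. -/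
open Real

/-- Along solutions of the Gödel geodesic system (with `a = 1`),
`B² := (u1)² + (e^{2x₁}/2)(u2)²` is a first integral: it is constant. -/
theorem godel_geodesic_first_integral_B
    (x₁ u0 u1 u2 u3 : ℝ → ℝ)
    (hx₁ : ∀ s, HasDerivAt x₁ (u1 s) s)
    (h0 : ∀ s, HasDerivAt u0 (-(2 * u0 s * u1 s + exp (x₁ s) * u1 s * u2 s)) s)
    (h1 : ∀ s, HasDerivAt u1
      (-(exp (x₁ s) * u0 s * u2 s + exp (2 * x₁ s) / 2 * (u2 s) ^ 2)) s)
    (h2 : ∀ s, HasDerivAt u2 (2 * exp (-(x₁ s)) * u1 s * u0 s) s)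
    (h3 : ∀ s, HasDerivAt u3 (0 : ℝ) s) :
    ∀ s t : ℝ,
      (u1 s) ^ 2 + exp (2 * x₁ s) / 2 * (u2 s) ^ 2
        = (u1 t) ^ 2 + exp (2 * x₁ t) / 2 * (u2 t) ^ 2 := by
  set B : ℝ → ℝ := fun s => (u1 s) ^ 2 + exp (2 * x₁ s) / 2 * (u2 s) ^ 2 with hB
  have hderiv : ∀ s, HasDerivAt B 0 s := by
    intro s
    have hb : HasDerivAt B
        (2 * u1 s * (-(exp (x₁ s) * u0 s * u2 s + exp (2 * x₁ s) / 2 * (u2 s) ^ 2))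
          + ((exp (2 * x₁ s) * (2 * u1 s)) / 2 * (u2 s) ^ 2
            + exp (2 * x₁ s) / 2 * (2 * u2 s * (2 * exp (-(x₁ s)) * u1 s * u0 s)))) s := by
      have e1 : HasDerivAt (fun s => (u1 s) ^ 2)
          (2 * u1 s * (-(exp (x₁ s) * u0 s * u2 s + exp (2 * x₁ s) / 2 * (u2 s) ^ 2))) s := by
        simpa [mul_comm, Pi.pow_def] using (h1 s).pow 2
      have hx : HasDerivAt (fun s => exp (2 * x₁ s)) (exp (2 * x₁ s) * (2 * u1 s)) s :=
        (((hx₁ s).const_mul 2).exp)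
      have e2 : HasDerivAt (fun s => exp (2 * x₁ s) / 2 * (u2 s) ^ 2)
          ((exp (2 * x₁ s) * (2 * u1 s)) / 2 * (u2 s) ^ 2
            + exp (2 * x₁ s) / 2 * (2 * u2 s * (2 * exp (-(x₁ s)) * u1 s * u0 s))) s := by
        have := (hx.div_const 2).mul ((h2 s).pow 2)
        simpa [pow_one, mul_comm, mul_left_comm, mul_assoc, Pi.mul_def, Pi.pow_def] using this
      simpa [Pi.add_def] using e1.add e2
    have key : 2 * u1 s * (-(exp (x₁ s) * u0 s * u2 s + exp (2 * x₁ s) / 2 * (u2 s) ^ 2))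
          + ((exp (2 * x₁ s) * (2 * u1 s)) / 2 * (u2 s) ^ 2
            + exp (2 * x₁ s) / 2 * (2 * u2 s * (2 * exp (-(x₁ s)) * u1 s * u0 s))) = 0 := by
      have h2x : exp (2 * x₁ s) = exp (x₁ s) * exp (x₁ s) := by
        rw [← exp_add]; ring_nf
      have hnx : exp (-(x₁ s)) = (exp (x₁ s))⁻¹ := exp_neg _
      rw [h2x, hnx]
      have hne : exp (x₁ s) ≠ 0 := (exp_pos _).ne'
      field_simp
      ring
    rw [key] at hb
    exact hb
  intro s t
  have : B s = B t := by
    have := fun s => (hderiv s).deriv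
    have hconst : ∀ a b : ℝ, B a = B b := by
      intro a b
      have h := is_const_of_deriv_eq_zero (fun s => (hderiv s).differentiableAt) this a b
      exact h
    exact hconst s t
  simpa [hB] using this
end

section
/- If α satisfies (√2-1)² ≤ α ≤ (√2+1)², then (1/2)(1/√α + √α) ≤ √2, with equality iff α = (√2±1)². Consequently, for fixed-radius geodesics in Gödel's universe with cosh(2r) = (1/2)(1/√α + √α), the radius satisfies 1 ≤ cosh(2r) ≤ √2, i.e., 0 ≤ r ≤ (1/2)·arccosh(√2). -/
open Real

/-- Inverse hyperbolic cosine on `[1, ∞)`. -/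
noncomputable def arcosh (x : ℝ) : ℝ := Real.log (x + Real.sqrt (x ^ 2 - 1))

lemma arcosh_sqrt2_eq : _root_.arcosh (Real.sqrt 2) = Real.log (Real.sqrt 2 + 1) := by
  unfold _root_.arcosh
  rw [Real.sq_sqrt (by norm_num : (0:ℝ) ≤ 2)]
  norm_num

lemma cosh_arcosh_sqrt2 : Real.cosh (_root_.arcosh (Real.sqrt 2)) = Real.sqrt 2 := by
  have hs2 : Real.sqrt 2 ^ 2 = 2 := Real.sq_sqrt (by norm_num)
  have h2 : 1 < Real.sqrt 2 := by nlinarith [Real.sqrt_nonneg 2]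
  have hb : 0 < Real.sqrt 2 + 1 := by linarith
  rw [arcosh_sqrt2_eq, Real.cosh_eq, Real.exp_log hb, Real.exp_neg, Real.exp_log hb]
  rw [div_eq_iff (by norm_num : (2:ℝ) ≠ 0)]
  field_simp
  nlinarith

/-- If `(√2-1)² ≤ α ≤ (√2+1)²` then `(1/2)(1/√α + √α) ≤ √2`, with equality
iff `α = (√2-1)²` or `α = (√2+1)²`. Consequently fixed-radius geodesics in
Gödel's universe, where `cosh(2r) = (1/2)(1/√α + √α)` with `r ≥ 0`, satisfy
`1 ≤ cosh(2r) ≤ √2`, i.e. `0 ≤ r ≤ (1/2)·arccosh(√2)`. -/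
theorem godel_fixed_radius_range (α : ℝ)
    (h₁ : (Real.sqrt 2 - 1) ^ 2 ≤ α) (h₂ : α ≤ (Real.sqrt 2 + 1) ^ 2) :
    (1 / 2) * (1 / Real.sqrt α + Real.sqrt α) ≤ Real.sqrt 2 ∧
    ((1 / 2) * (1 / Real.sqrt α + Real.sqrt α) = Real.sqrt 2 ↔
      α = (Real.sqrt 2 - 1) ^ 2 ∨ α = (Real.sqrt 2 + 1) ^ 2) ∧
    (∀ r : ℝ, 0 ≤ r →
      Real.cosh (2 * r) = (1 / 2) * (1 / Real.sqrt α + Real.sqrt α) →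
      (1 ≤ Real.cosh (2 * r) ∧ Real.cosh (2 * r) ≤ Real.sqrt 2 ∧
        0 ≤ r ∧ r ≤ (1 / 2) * _root_.arcosh (Real.sqrt 2))) := by
  have hs2 : Real.sqrt 2 ^ 2 = 2 := Real.sq_sqrt (by norm_num)
  have h2 : 1 < Real.sqrt 2 := by nlinarith [Real.sqrt_nonneg 2]
  have ha : 0 < Real.sqrt 2 - 1 := by linarith
  have hb : 0 < Real.sqrt 2 + 1 := by linarith
  have hα : 0 < α := lt_of_lt_of_le (by positivity) h₁
  set s := Real.sqrt α with hsdef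
  have hs0 : 0 < s := Real.sqrt_pos.2 hα
  have hsα : s ^ 2 = α := Real.sq_sqrt hα.le
  have has : Real.sqrt 2 - 1 ≤ s := by
    have := Real.sqrt_le_sqrt h₁
    rwa [Real.sqrt_sq ha.le] at this
  have hsb : s ≤ Real.sqrt 2 + 1 := by
    have := Real.sqrt_le_sqrt h₂
    rwa [Real.sqrt_sq hb.le] at this
  have key : (s - (Real.sqrt 2 - 1)) * (s - (Real.sqrt 2 + 1)) ≤ 0 :=
    mul_nonpos_of_nonneg_of_nonpos (by linarith) (by linarith)
  have hnum : 1 + s ^ 2 - 2 * Real.sqrt 2 * s ≤ 0 := by nlinarith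
  have hdiff : (1 / 2) * (1 / s + s) - Real.sqrt 2
      = (1 + s ^ 2 - 2 * Real.sqrt 2 * s) / (2 * s) := by
    field_simp
  have hmain : (1 / 2) * (1 / s + s) ≤ Real.sqrt 2 := by
    have : (1 + s ^ 2 - 2 * Real.sqrt 2 * s) / (2 * s) ≤ 0 :=
      div_nonpos_of_nonpos_of_nonneg hnum (by linarith)
    linarith [hdiff ▸ this]
  refine ⟨hmain, ?_, ?_⟩
  · constructor
    · intro heq
      have h0 : (1 + s ^ 2 - 2 * Real.sqrt 2 * s) / (2 * s) = 0 := by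
        rw [← hdiff, heq]; ring
      have h0' : 1 + s ^ 2 - 2 * Real.sqrt 2 * s = 0 := by
        rcases div_eq_zero_iff.1 h0 with h | h
        · exact h
        · exact absurd h (by positivity)
      have hprod : (s - (Real.sqrt 2 - 1)) * (s - (Real.sqrt 2 + 1)) = 0 := by
        nlinarith [hs2]
      rcases mul_eq_zero.1 hprod with h | h
      · left
        have : s = Real.sqrt 2 - 1 := by linarith [sub_eq_zero.1 h]
        rw [← hsα, this]
      · right
        have : s = Real.sqrt 2 + 1 := by linarith [sub_eq_zero.1 h]
        rw [← hsα, this]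
    · intro h
      rcases h with h | h
      · have hs : s = Real.sqrt 2 - 1 := by
          rw [hsdef, h, Real.sqrt_sq ha.le]
        rw [hs]
        have hinv : 1 / (Real.sqrt 2 - 1) = Real.sqrt 2 + 1 := by
          rw [div_eq_iff ha.ne']; nlinarith
        rw [hinv]; ring
      · have hs : s = Real.sqrt 2 + 1 := by
          rw [hsdef, h, Real.sqrt_sq hb.le]
        rw [hs]
        have hinv : 1 / (Real.sqrt 2 + 1) = Real.sqrt 2 - 1 := by
          rw [div_eq_iff hb.ne']; nlinarith
        rw [hinv]; ring
  · intro r hr hcosh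
    have hle : Real.cosh (2 * r) ≤ Real.sqrt 2 := by rw [hcosh]; exact hmain
    have hcoshA : Real.cosh (_root_.arcosh (Real.sqrt 2)) = Real.sqrt 2 :=
      cosh_arcosh_sqrt2
    have hA0 : 0 ≤ _root_.arcosh (Real.sqrt 2) := by
      rw [arcosh_sqrt2_eq]; exact Real.log_nonneg (by linarith)
    have h2rA : 2 * r ≤ _root_.arcosh (Real.sqrt 2) := by
      have := Real.cosh_le_cosh (x := 2 * r) (y := _root_.arcosh (Real.sqrt 2))
      rw [hcoshA] at this
      have habs : |2 * r| ≤ |_root_.arcosh (Real.sqrt 2)| := this.1 hle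
      rw [abs_of_nonneg (by linarith), abs_of_nonneg hA0] at habs
      exact habs
    exact ⟨Real.one_le_cosh _, hle, hr, by linarith⟩
end
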